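/- Let A, B be finite families of subsets of a finite set S of size n such that (A,B) is a cancellative pair and every set in A and every set in B has exactly k elements, where k ≤ n. Then |A| * |B| ≤ 2^(2*(n-k)). -/

import Mathlib

def Cancellative {α : Type*} [DecidableEq α] (A B : Finset (Finset α)) : Prop :=
  (∀ a1 ∈ A, ∀ a2 ∈ A, ∀ b ∈ B, a1 ∪ b = a2 ∪ b → a1 = a2) ∧
  (∀ a ∈ A, ∀ b1 ∈ B, ∀ b2 ∈ B, a ∪ b1 = a ∪ b2 → b1 = b2)

theorem uniform_cancellative_bound {α : Type*} [DecidableEq α] [Fintype α]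
    (n k : ℕ) (hn : Fintype.card α = n) (hk : k ≤ n)
    (A B : Finset (Finset α)) (hc : Cancellative A B)
    (hA : ∀ a ∈ A, a.card = k) (hB : ∀ b ∈ B, b.card = k) :
    A.card * B.card ≤ 2 ^ (2 * (n - k)) := by
  rcases A.eq_empty_or_nonempty with rfl | ⟨a, ha⟩
  · simp
  rcases B.eq_empty_or_nonempty with rfl | ⟨b, hb⟩
  · simp
  have hcompl : ∀ s : Finset α, s.card = k → sᶜ.card = n - k := by
    intro s hs
    rw [Finset.card_compl, hs, hn]
  have hBcard : B.card ≤ 2 ^ (n - k) := by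
    calc B.card ≤ (aᶜ : Finset α).powerset.card := by
          apply Finset.card_le_card_of_injOn (fun b => b \ a)
          · intro b' hb'
            simp only [Finset.mem_coe, Finset.mem_powerset]
            intro x hx
            simp only [Finset.mem_sdiff] at hx
            simp [hx.2]
          · intro b1 hb1 b2 hb2 h
            apply hc.2 a ha b1 hb1 b2 hb2
            have : a ∪ (b1 \ a) = a ∪ (b2 \ a) := by rw [show b1 \ a = b2 \ a from h]
            rwa [Finset.union_sdiff_self_eq_union, Finset.union_sdiff_self_eq_union] at this
      _ = 2 ^ (n - k) := by rw [Finset.card_powerset, hcompl a (hA a ha)]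
  have hAcard : A.card ≤ 2 ^ (n - k) := by
    calc A.card ≤ (bᶜ : Finset α).powerset.card := by
          apply Finset.card_le_card_of_injOn (fun a => a \ b)
          · intro a' ha'
            simp only [Finset.mem_coe, Finset.mem_powerset]
            intro x hx
            simp only [Finset.mem_sdiff] at hx
            simp [hx.2]
          · intro a1 ha1 a2 ha2 h
            apply hc.1 a1 ha1 a2 ha2 b hb
            have : b ∪ (a1 \ b) = b ∪ (a2 \ b) := by rw [show a1 \ b = a2 \ b from h]
            rwa [Finset.union_sdiff_self_eq_union, Finset.union_sdiff_self_eq_union,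
              Finset.union_comm b a1, Finset.union_comm b a2] at this
      _ = 2 ^ (n - k) := by rw [Finset.card_powerset, hcompl b (hB b hb)]
  calc A.card * B.card ≤ 2 ^ (n - k) * 2 ^ (n - k) := Nat.mul_le_mul hAcard hBcard
    _ = 2 ^ (2 * (n - k)) := by rw [← pow_add, two_mul]
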